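/- Let R ∈ U(d²) satisfy R(X⊗I)R⁻¹ ∈ 𝔲(d)⊗I and R(I⊗Y)R⁻¹ ∈ I⊗𝔲(d) for all X, Y ∈ 𝔲(d) (i.e., conjugation by R preserves each tensor factor of 𝔥). Then R is primitive: R maps every decomposable tensor of ℂᵈ ⊗ ℂᵈ to a decomposable tensor. -/

import Mathlib

open Matrix Kronecker Complex

/-- The tensor (Kronecker) product of two vectors of `ℂᵈ`, as a vector of `ℂᵈ ⊗ ℂᵈ`. -/
def tensorVec {d : ℕ} (x y : Fin d → ℂ) : Fin d × Fin d → ℂ := fun p => x p.1 * y p.2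

/-- A vector of `ℂᵈ ⊗ ℂᵈ` is decomposable if it is a tensor product of two vectors. -/
def Decomposable {d : ℕ} (z : Fin d × Fin d → ℂ) : Prop := ∃ u v : Fin d → ℂ, z = tensorVec u v

/-- A gate on `ℂᵈ ⊗ ℂᵈ` is primitive if it maps decomposable tensors to decomposable tensors. -/
def Primitive {d : ℕ} (V : Matrix (Fin d × Fin d) (Fin d × Fin d) ℂ) : Prop :=
  ∀ x y : Fin d → ℂ, Decomposable (V.mulVec (tensorVec x y))


lemma rank_one_proj {d : ℕ} (p : Matrix (Fin d) (Fin d) ℂ)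
    (hH : pᴴ = p) (hI : p * p = p) (htr : p.trace = 1) :
    ∃ a : Fin d, p a a ≠ 0 ∧ ∀ j k, p j k = (p a a)⁻¹ * p j a * p a k := by
  -- diagonal entry nonzero
  have hdiag : ∃ a, p a a ≠ 0 := by
    by_contra h
    push_neg at h
    have : p.trace = 0 := by
      simp [Matrix.trace, Matrix.diag, h]
    rw [htr] at this; exact one_ne_zero this
  obtain ⟨a, ha⟩ := hdiag
  refine ⟨a, ha, ?_⟩
  set t := (p a a)⁻¹ with ht
  have hmul : ∀ j k, ∑ m, p j m * p m k = p j k := by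
    intro j k
    have := congrFun (congrFun hI j) k
    simpa [Matrix.mul_apply] using this
  set r : Matrix (Fin d) (Fin d) ℂ := Matrix.of (fun j k => t * p j a * p a k) with hr
  have hconj : ∀ j k, (starRingEnd ℂ) (p j k) = p k j := by
    intro j k
    have := congrFun (congrFun hH k) j
    simpa [Matrix.conjTranspose_apply] using this
  have hpr : p * r = r := by
    ext j k
    simp only [Matrix.mul_apply, hr, Matrix.of_apply]
    calc ∑ m, p j m * (t * p m a * p a k)
        = t * (∑ m, p j m * p m a) * p a k := by
          rw [Finset.mul_sum, Finset.sum_mul]; congr 1; ext m; ring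
      _ = t * p j a * p a k := by rw [hmul]
  have hrp : r * p = r := by
    ext j k
    simp only [Matrix.mul_apply, hr, Matrix.of_apply]
    calc ∑ m, t * p j a * p a m * p m k
        = t * p j a * (∑ m, p a m * p m k) := by
          rw [Finset.mul_sum]; congr 1; ext m; ring
      _ = t * p j a * p a k := by rw [hmul]
  have hrr : r * r = r := by
    ext j k
    simp only [Matrix.mul_apply, hr, Matrix.of_apply]
    calc ∑ m, t * p j a * p a m * (t * p m a * p a k)
        = (t * t) * p j a * (∑ m, p a m * p m a) * p a k := by
          rw [Finset.mul_sum, Finset.sum_mul]; congr 1; ext m; ring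
      _ = (t * t) * p j a * p a a * p a k := by rw [hmul]
      _ = t * p j a * p a k := by
          have htp : t * p a a = 1 := by rw [ht]; exact inv_mul_cancel₀ ha
          linear_combination (t * p j a * p a k) * htp
  have htrr : r.trace = 1 := by
    have : r.trace = t * ∑ m, p a m * p m a := by
      simp only [Matrix.trace, Matrix.diag, hr, Matrix.of_apply, Finset.mul_sum]
      congr 1; ext m; ring
    rw [this, hmul, ht]
    field_simp
  set q := p - r with hq
  have hqq : q * q = q := by
    rw [hq, Matrix.sub_mul, Matrix.mul_sub, Matrix.mul_sub, hI, hpr, hrp, hrr]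
    abel
  have htrq : q.trace = 0 := by
    rw [hq, Matrix.trace_sub, htr, htrr, sub_self]
  -- q is Hermitian
  have hqconj : ∀ j k, (starRingEnd ℂ) (q j k) = q k j := by
    intro j k
    have hta : (starRingEnd ℂ) t = t := by
      rw [ht, map_inv₀]
      congr 1
      exact hconj a a
    have hcr : (starRingEnd ℂ) (t * p j a * p a k) = t * p k a * p a j := by
      rw [RingHom.map_mul, RingHom.map_mul, hta, hconj, hconj]; ring
    simp only [hq, Matrix.sub_apply, hr, Matrix.of_apply, map_sub, hcr, hconj, ht]
    rw [← ht, hcr]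
  -- trace (q*q) = sum of |q j k|^2
  have hsum : ∑ j, ∑ k, (Complex.normSq (q j k) : ℂ) = 0 := by
    have h1 : (q * q).trace = ∑ j, ∑ k, q j k * q k j := by
      simp [Matrix.trace, Matrix.diag, Matrix.mul_apply]
    have h2 : (q * q).trace = 0 := by rw [hqq, htrq]
    rw [h2] at h1
    calc ∑ j, ∑ k, (Complex.normSq (q j k) : ℂ)
        = ∑ j, ∑ k, q j k * q k j := by
          apply Finset.sum_congr rfl; intro j _
          apply Finset.sum_congr rfl; intro k _
          rw [← hqconj j k, Complex.mul_conj]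
      _ = 0 := h1.symm
  have hsumR : ∑ j, ∑ k, Complex.normSq (q j k) = 0 := by exact_mod_cast hsum
  have hq0 : ∀ j k, q j k = 0 := by
    intro j k
    have hin := (Finset.sum_eq_zero_iff_of_nonneg
      (fun j _ => Finset.sum_nonneg fun k _ => Complex.normSq_nonneg _)).mp hsumR j
      (Finset.mem_univ j)
    have := (Finset.sum_eq_zero_iff_of_nonneg
      (fun k _ => Complex.normSq_nonneg _)).mp hin k (Finset.mem_univ k)
    exact Complex.normSq_eq_zero.mp this
  intro j k
  have := hq0 j k
  simp only [hq, Matrix.sub_apply, hr, Matrix.of_apply] at this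
  have := sub_eq_zero.mp this
  rw [this, ht]

/-- If conjugation by a unitary `R` on `ℂᵈ ⊗ ℂᵈ` preserves each tensor
factor of `𝔥` (sends `𝔲(d)⊗I` into `𝔲(d)⊗I` and `I⊗𝔲(d)` into `I⊗𝔲(d)`), then `R` is
primitive. -/
theorem stmt15 {d : ℕ} (R : Matrix (Fin d × Fin d) (Fin d × Fin d) ℂ)
    (hR : R ∈ Matrix.unitaryGroup (Fin d × Fin d) ℂ)
    (h1 : ∀ X : Matrix (Fin d) (Fin d) ℂ, Xᴴ = -X →
      ∃ X' : Matrix (Fin d) (Fin d) ℂ, X'ᴴ = -X' ∧ R * (X ⊗ₖ (1 : Matrix (Fin d) (Fin d) ℂ)) * R⁻¹ =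
        X' ⊗ₖ (1 : Matrix (Fin d) (Fin d) ℂ))
    (h2 : ∀ Y : Matrix (Fin d) (Fin d) ℂ, Yᴴ = -Y →
      ∃ Y' : Matrix (Fin d) (Fin d) ℂ, Y'ᴴ = -Y' ∧ R * ((1 : Matrix (Fin d) (Fin d) ℂ) ⊗ₖ Y) * R⁻¹ =
        (1 : Matrix (Fin d) (Fin d) ℂ) ⊗ₖ Y') :
    Primitive R := by
  intro x y
  by_cases hx : x = 0
  · refine ⟨0, 0, ?_⟩
    have h0 : tensorVec x y = 0 := by
      funext pr; simp [tensorVec, hx]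
    rw [h0, Matrix.mulVec_zero]
    funext pr; simp [tensorVec]
  obtain ⟨a₀, ha₀⟩ : ∃ a, x a ≠ 0 := by
    by_contra h; push_neg at h; exact hx (funext h)
  have hRinv : R⁻¹ = star R := Matrix.inv_eq_left_inv hR.1
  have hRR : R⁻¹ * R = 1 := by rw [hRinv]; exact hR.1
  -- the scalar s = ⟨x, x⟩
  set s : ℂ := ∑ c, (starRingEnd ℂ) (x c) * x c with hs
  have hs_eq : s = ((∑ c, Complex.normSq (x c) : ℝ) : ℂ) := by
    rw [hs]; push_cast
    apply Finset.sum_congr rfl; intro c _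
    rw [Complex.normSq_eq_conj_mul_self]
  have hs_ne : s ≠ 0 := by
    rw [hs_eq]
    rw [Complex.ofReal_ne_zero]
    have hpos : 0 < ∑ c, Complex.normSq (x c) := by
      apply Finset.sum_pos' (fun c _ => Complex.normSq_nonneg _)
      exact ⟨a₀, Finset.mem_univ a₀, Complex.normSq_pos.mpr ha₀⟩
    exact ne_of_gt hpos
  have hs_conj : (starRingEnd ℂ) s = s := by
    rw [hs_eq]; exact Complex.conj_ofReal _
  -- the matrix X = (i/s) x x†
  set X : Matrix (Fin d) (Fin d) ℂ :=
    Matrix.of (fun j k => Complex.I * s⁻¹ * (x j * (starRingEnd ℂ) (x k))) with hX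
  have hXskew : Xᴴ = -X := by
    ext j k
    simp only [hX, Matrix.conjTranspose_apply, Matrix.neg_apply, Matrix.of_apply, star_def]
    rw [RingHom.map_mul, RingHom.map_mul, RingHom.map_mul, map_inv₀, hs_conj,
      Complex.conj_I, Complex.conj_conj]
    ring
  obtain ⟨X', hX'skew, hc⟩ := h1 X hXskew
  set z := R.mulVec (tensorVec x y) with hz
  -- X x = i x  pointwise, hence key1
  have key1 : (X ⊗ₖ (1 : Matrix (Fin d) (Fin d) ℂ)).mulVec (tensorVec x y)
      = Complex.I • tensorVec x y := by
    funext pr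
    obtain ⟨j, b⟩ := pr
    simp only [Matrix.mulVec, dotProduct, Fintype.sum_prod_type, kroneckerMap_apply,
      Pi.smul_apply, smul_eq_mul]
    calc ∑ k, ∑ e, X j k * (1 : Matrix (Fin d) (Fin d) ℂ) b e * tensorVec x y (k, e)
        = ∑ k, X j k * tensorVec x y (k, b) := by
          apply Finset.sum_congr rfl; intro k _
          rw [Finset.sum_eq_single b]
          · simp [Matrix.one_apply]
          · intro e _ he; simp [Matrix.one_apply, (Ne.symm he)]
          · intro h; exact absurd (Finset.mem_univ b) h
      _ = Complex.I * tensorVec x y (j, b) := by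
          simp only [hX, Matrix.of_apply, tensorVec]
          calc ∑ k, Complex.I * s⁻¹ * (x j * (starRingEnd ℂ) (x k)) * (x k * y b)
              = Complex.I * s⁻¹ * x j * y b * ∑ k, (starRingEnd ℂ) (x k) * x k := by
                rw [Finset.mul_sum]; apply Finset.sum_congr rfl; intro k _; ring
            _ = Complex.I * (x j * y b) := by
                rw [← hs]; field_simp
  -- key2 : (X' ⊗ 1) z = i z
  have hconj' : X' ⊗ₖ (1 : Matrix (Fin d) (Fin d) ℂ) =
      R * (X ⊗ₖ (1 : Matrix (Fin d) (Fin d) ℂ)) * R⁻¹ := hc.symm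
  have key2 : (X' ⊗ₖ (1 : Matrix (Fin d) (Fin d) ℂ)).mulVec z = Complex.I • z := by
    have hcollapse : (R * (X ⊗ₖ (1 : Matrix (Fin d) (Fin d) ℂ)) * R⁻¹) * R
        = R * (X ⊗ₖ (1 : Matrix (Fin d) (Fin d) ℂ)) := by
      rw [Matrix.mul_assoc, hRR, Matrix.mul_one]
    rw [hconj', hz]
    calc (R * (X ⊗ₖ 1) * R⁻¹) *ᵥ (R *ᵥ tensorVec x y)
        = ((R * (X ⊗ₖ 1) * R⁻¹) * R) *ᵥ tensorVec x y := by rw [Matrix.mulVec_mulVec]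
      _ = (R * (X ⊗ₖ 1)) *ᵥ tensorVec x y := by rw [hcollapse]
      _ = R *ᵥ ((X ⊗ₖ 1) *ᵥ tensorVec x y) := by rw [← Matrix.mulVec_mulVec]
      _ = R *ᵥ (Complex.I • tensorVec x y) := by rw [key1]
      _ = Complex.I • (R *ᵥ tensorVec x y) := Matrix.mulVec_smul _ _ _
  -- X * X = i X
  have hXX : X * X = Complex.I • X := by
    ext j k
    simp only [Matrix.mul_apply, hX, Matrix.of_apply, Matrix.smul_apply, smul_eq_mul]
    calc ∑ m, Complex.I * s⁻¹ * (x j * (starRingEnd ℂ) (x m)) *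
          (Complex.I * s⁻¹ * (x m * (starRingEnd ℂ) (x k)))
        = Complex.I * s⁻¹ * Complex.I * s⁻¹ * (x j * (starRingEnd ℂ) (x k)) *
            ∑ m, (starRingEnd ℂ) (x m) * x m := by
          rw [Finset.mul_sum]; apply Finset.sum_congr rfl; intro m _; ring
      _ = Complex.I * (Complex.I * s⁻¹ * (x j * (starRingEnd ℂ) (x k))) := by
          rw [← hs]; field_simp
  -- (X'⊗1)² = i (X'⊗1), hence X'² = i X'
  have hbig : (X' ⊗ₖ (1 : Matrix (Fin d) (Fin d) ℂ)) * (X' ⊗ₖ (1 : Matrix (Fin d) (Fin d) ℂ))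
      = Complex.I • (X' ⊗ₖ (1 : Matrix (Fin d) (Fin d) ℂ)) := by
    rw [hconj']
    calc (R * (X ⊗ₖ 1) * R⁻¹) * (R * (X ⊗ₖ 1) * R⁻¹)
        = R * ((X ⊗ₖ 1) * (R⁻¹ * R) * (X ⊗ₖ 1)) * R⁻¹ := by
          simp only [Matrix.mul_assoc]
      _ = R * ((X ⊗ₖ 1) * (X ⊗ₖ 1)) * R⁻¹ := by rw [hRR, Matrix.mul_one]
      _ = R * (Complex.I • (X ⊗ₖ 1)) * R⁻¹ := by
          rw [← Matrix.mul_kronecker_mul, hXX, Matrix.one_mul, smul_kronecker]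
      _ = Complex.I • (R * (X ⊗ₖ 1) * R⁻¹) := by
          rw [Matrix.mul_smul, Matrix.smul_mul]
  have hX'X' : X' * X' = Complex.I • X' := by
    ext j k
    have h := congrFun (congrFun hbig (j, a₀)) (k, a₀)
    rw [← Matrix.mul_kronecker_mul, Matrix.one_mul] at h
    have h2 : (Complex.I • X') ⊗ₖ (1 : Matrix (Fin d) (Fin d) ℂ) =
        Complex.I • (X' ⊗ₖ (1 : Matrix (Fin d) (Fin d) ℂ)) := smul_kronecker _ _ _
    rw [← h2] at h
    simpa [Matrix.one_apply] using h
  -- trace of X' is i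
  have htrX : X.trace = Complex.I := by
    simp only [Matrix.trace, Matrix.diag, hX, Matrix.of_apply]
    calc ∑ j, Complex.I * s⁻¹ * (x j * (starRingEnd ℂ) (x j))
        = Complex.I * s⁻¹ * ∑ j, (starRingEnd ℂ) (x j) * x j := by
          rw [Finset.mul_sum]; apply Finset.sum_congr rfl; intro j _; ring
      _ = Complex.I := by rw [← hs]; field_simp
  have hd_ne : (d : ℂ) ≠ 0 := by
    have : 0 < d := Fin.pos a₀
    exact_mod_cast Nat.cast_ne_zero.mpr (Nat.pos_iff_ne_zero.mp this)
  have htrX' : X'.trace = Complex.I := by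
    have hbt : (X' ⊗ₖ (1 : Matrix (Fin d) (Fin d) ℂ)).trace
        = (X ⊗ₖ (1 : Matrix (Fin d) (Fin d) ℂ)).trace := by
      rw [hconj', Matrix.trace_mul_cycle, hRR, Matrix.one_mul]
    rw [Matrix.trace_kronecker, Matrix.trace_kronecker, htrX, Matrix.trace_one] at hbt
    have hcard : ((Fintype.card (Fin d) : ℂ)) = (d : ℂ) := by
      rw [Fintype.card_fin]
    rw [hcard] at hbt
    exact mul_right_cancel₀ hd_ne hbt
  -- p = -i X' is a rank-one orthogonal projection
  set p : Matrix (Fin d) (Fin d) ℂ := (-Complex.I) • X' with hp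
  have hH : pᴴ = p := by
    rw [hp, Matrix.conjTranspose_smul, hX'skew]
    simp [star_def, Complex.conj_I]
  have hpI : p * p = p := by
    rw [hp, Matrix.smul_mul, Matrix.mul_smul, hX'X', smul_smul, smul_smul]
    congr 1
    simp [Complex.I_mul_I]
  have htrp : p.trace = 1 := by
    rw [hp, Matrix.trace_smul, htrX']
    simp [Complex.I_mul_I]
  obtain ⟨a, ha, hpr⟩ := rank_one_proj p hH hpI htrp
  -- entrywise consequence of key2 for p
  have hkey : ∀ j b, ∑ k, p j k * z (k, b) = z (j, b) := by
    intro j b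
    have h := congrFun key2 (j, b)
    simp only [Matrix.mulVec, dotProduct, Fintype.sum_prod_type, kroneckerMap_apply,
      Pi.smul_apply, smul_eq_mul] at h
    have h' : ∑ k, X' j k * z (k, b) = Complex.I * z (j, b) := by
      rw [← h]
      apply Finset.sum_congr rfl; intro k _
      rw [Finset.sum_eq_single b]
      · simp [Matrix.one_apply]
      · intro e _ he; simp [Matrix.one_apply, (Ne.symm he)]
      · intro hmem; exact absurd (Finset.mem_univ b) hmem
    calc ∑ k, p j k * z (k, b) = ∑ k, -Complex.I * (X' j k * z (k, b)) := by
          apply Finset.sum_congr rfl; intro k _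
          simp only [hp, Matrix.smul_apply, smul_eq_mul]; ring
      _ = -Complex.I * ∑ k, X' j k * z (k, b) := by rw [Finset.mul_sum]
      _ = -Complex.I * (Complex.I * z (j, b)) := by rw [h']
      _ = z (j, b) := by
          have : -Complex.I * Complex.I = 1 := by
            rw [neg_mul, Complex.I_mul_I, neg_neg]
          rw [← mul_assoc, this, one_mul]
  refine ⟨fun j => p j a, fun b => (p a a)⁻¹ * ∑ k, p a k * z (k, b), ?_⟩
  funext pr
  obtain ⟨j, b⟩ := pr
  simp only [tensorVec]
  calc z (j, b) = ∑ k, p j k * z (k, b) := (hkey j b).symm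
    _ = p j a * ((p a a)⁻¹ * ∑ k, p a k * z (k, b)) := by
        rw [Finset.mul_sum, Finset.mul_sum]
        apply Finset.sum_congr rfl; intro k _
        rw [hpr j k]; ring
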